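/- (Clifford theory, exhaustion) Let A be a complex algebra and Γ a finite group acting on A by automorphisms. Every irreducible Γ⋉A-module N containing an irreducible A-submodule V is isomorphic to a direct summand of Ind_A^{Γ⋉A} V. -/

import Mathlib

/-!
STATEMENT 11 (Clifford theory, exhaustion): Let A be a complex algebra and Γ a finite
group acting on A by automorphisms, with crossed product A' = Γ ⋉ A (axiomatized).
Every irreducible A'-module N containing an irreducible A-submodule V is isomorphic
to a direct summand of Ind_A^{Γ⋉A} V (axiomatized by its basis decomposition).
-/

universe u

theorem stmt11
    (A A' : Type u) [Ring A] [Ring A'] [Algebra ℂ A] [Algebra ℂ A']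
    (Γ : Type u) [Group Γ] [Fintype Γ]
    (ψ : Γ →* RingAut A) (ι : A →ₐ[ℂ] A') (g : Γ →* A'ˣ)
    (hrel : ∀ (γ : Γ) (a : A), (g γ : A') * ι a = ι (ψ γ a) * (g γ : A'))
    (hbasis : ∀ x : A', ∃! c : Γ → A, x = ∑ γ : Γ, ι (c γ) * (g γ : A'))
    -- an irreducible A'-module N
    (N : Type u) [AddCommGroup N] [Module A' N] (hN : IsSimpleModule A' N)
    -- an irreducible A-submodule V of N (an A-compatible embedding)
    (V : Type u) [AddCommGroup V] [Module A V] (hV : IsSimpleModule A V)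
    (j : V →+ N) (hjinj : Function.Injective j)
    (hjA : ∀ (a : A) (v : V), j (a • v) = ι a • j v)
    -- the induced module Ind_A^{Γ⋉A} V, axiomatized
    (IV : Type u) [AddCommGroup IV] [Module A' IV]
    (emb : V →+ IV)
    (hembA : ∀ (a : A) (v : V), emb (a • v) = ι a • emb v)
    (hIbasis : ∀ x : IV, ∃! c : Γ → V, x = ∑ γ : Γ, (g γ : A') • emb (c γ)) :
    ∃ (P P' : Submodule A' IV), IsCompl P P' ∧ Nonempty (P ≃ₗ[A'] N) := by
  classical
  -- the `A`-module structure on `IV` through `ι`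
  letI : Module A IV := Module.compHom IV (ι.toRingHom : A →+* A')
  have hAsmul : ∀ (a : A) (x : IV), a • x = ι a • x := fun a x => rfl
  -- basic relations
  have hψ1 : ∀ (γ : Γ) (a : A), ψ γ (ψ γ⁻¹ a) = a := by
    intro γ a
    have h : ψ γ * ψ γ⁻¹ = 1 := by rw [← map_mul, mul_inv_cancel, map_one]
    calc ψ γ (ψ γ⁻¹ a) = (ψ γ * ψ γ⁻¹) a := rfl
    _ = (1 : RingAut A) a := by rw [h]
    _ = a := rfl
  have hψ2 : ∀ (γ : Γ) (a : A), ψ γ⁻¹ (ψ γ a) = a := by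
    intro γ a
    have := hψ1 γ⁻¹ a
    rwa [inv_inv] at this
  have hrel' : ∀ (γ : Γ) (a : A), ι a * (g γ : A') = (g γ : A') * ι (ψ γ⁻¹ a) := by
    intro γ a
    rw [hrel, hψ1]
  have hrel'' : ∀ (γ : Γ) (a : A), (g γ⁻¹ : A') * ι (ψ γ a) = ι a * (g γ⁻¹ : A') := by
    intro γ a
    have := hrel γ⁻¹ (ψ γ a)
    rwa [hψ2] at this
  have hgmul : ∀ (δ γ : Γ), (g δ : A') * (g γ : A') = (g (δ * γ) : A') := by
    intro δ γ; rw [map_mul, Units.val_mul]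
  have hg1 : (g (1 : Γ) : A') = 1 := by rw [map_one, Units.val_one]
  -- key computations, valid in any A'-module equipped with a compatible map from V
  have key1 : ∀ {M : Type u} [AddCommGroup M] [Module A' M] (k : V →+ M),
      (∀ (a : A) (v : V), k (a • v) = ι a • k v) → ∀ (a : A) (c : Γ → V),
      ι a • (∑ γ : Γ, (g γ : A') • k (c γ)) = ∑ γ : Γ, (g γ : A') • k (ψ γ⁻¹ a • c γ) := by
    intro M _ _ k hk a c
    rw [Finset.smul_sum]
    refine Finset.sum_congr rfl fun γ _ => ?_
    rw [hk, smul_smul, smul_smul, hrel' γ a]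
  have key2 : ∀ {M : Type u} [AddCommGroup M] [Module A' M] (k : V →+ M) (δ : Γ) (c : Γ → V),
      (g δ : A') • (∑ γ : Γ, (g γ : A') • k (c γ)) = ∑ γ : Γ, (g γ : A') • k (c (δ⁻¹ * γ)) := by
    intro M _ _ k δ c
    rw [Finset.smul_sum]
    refine Fintype.sum_equiv (Equiv.mulLeft δ) _ _ fun γ => ?_
    simp only [Equiv.coe_mulLeft]
    rw [smul_smul, hgmul, inv_mul_cancel_left]
  -- the coefficient function on IV
  set cf : IV → Γ → V := fun x => (hIbasis x).choose with hcf
  have hcspec : ∀ x : IV, x = ∑ γ : Γ, (g γ : A') • emb (cf x γ) := fun x => (hIbasis x).choose_spec.1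
  have hcuniq : ∀ (x : IV) (c : Γ → V), x = ∑ γ : Γ, (g γ : A') • emb (c γ) → c = cf x :=
    fun x c h => (hIbasis x).choose_spec.2 c h
  -- the Frobenius-reciprocity map φ : IV → N
  set φf : IV → N := fun x => ∑ γ : Γ, (g γ : A') • j (cf x γ) with hφf
  have hφE : ∀ c : Γ → V, φf (∑ γ : Γ, (g γ : A') • emb (c γ)) = ∑ γ : Γ, (g γ : A') • j (c γ) := by
    intro c
    have h := hcuniq _ c rfl
    simp only [hφf]
    rw [← h]
  have hφadd : ∀ x y : IV, φf (x + y) = φf x + φf y := by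
    intro x y
    have hxy : x + y = ∑ γ : Γ, (g γ : A') • emb (cf x γ + cf y γ) := by
      conv_lhs => rw [hcspec x, hcspec y]
      rw [← Finset.sum_add_distrib]
      exact Finset.sum_congr rfl fun γ _ => by rw [map_add, smul_add]
    rw [hxy, hφE]
    simp only [hφf, map_add, smul_add, Finset.sum_add_distrib]
  have hφι : ∀ (a : A) (x : IV), φf (ι a • x) = ι a • φf x := by
    intro a x
    have h1 : ι a • x = ∑ γ : Γ, (g γ : A') • emb (ψ γ⁻¹ a • cf x γ) := by
      conv_lhs => rw [hcspec x]
      exact key1 emb hembA a (cf x)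
    rw [h1, hφE]
    simp only [hφf]
    exact (key1 j hjA a (cf x)).symm
  have hφg : ∀ (δ : Γ) (x : IV), φf ((g δ : A') • x) = (g δ : A') • φf x := by
    intro δ x
    have h1 : (g δ : A') • x = ∑ γ : Γ, (g γ : A') • emb (cf x (δ⁻¹ * γ)) := by
      conv_lhs => rw [hcspec x]
      exact key2 emb δ (cf x)
    rw [h1, hφE]
    simp only [hφf]
    exact (key2 j δ (cf x)).symm
  -- generators generate all of A'
  have hgen : ∀ {M₁ M₂ : Type u} [AddCommGroup M₁] [AddCommGroup M₂]
      [Module A' M₁] [Module A' M₂] (f : M₁ →+ M₂),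
      (∀ (a : A) (x : M₁), f (ι a • x) = ι a • f x) →
      (∀ (γ : Γ) (x : M₁), f ((g γ : A') • x) = (g γ : A') • f x) →
      ∀ (r : A') (x : M₁), f (r • x) = r • f x := by
    intro M₁ M₂ _ _ _ _ f h1 h2 r x
    obtain ⟨c, hc, -⟩ := hbasis r
    rw [hc, Finset.sum_smul, map_sum, Finset.sum_smul]
    exact Finset.sum_congr rfl fun γ _ => by rw [mul_smul, mul_smul, h1, h2]
  set φh : IV →+ N := AddMonoidHom.mk' φf hφadd with hφh
  set φ : IV →ₗ[A'] N :=
    { toFun := φf, map_add' := hφadd,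
      map_smul' := fun r x => hgen φh hφι hφg r x } with hφdef
  have hφapp : ∀ x : IV, φ x = φf x := fun x => rfl
  -- a nonzero vector of V
  haveI : Nontrivial V := by
    haveI := hV
    exact IsSimpleModule.nontrivial A V
  obtain ⟨v0, hv0⟩ := exists_ne (0 : V)
  -- φ sends emb v to j v
  have hdelta : ∀ {M : Type u} [AddCommGroup M] [Module A' M] (k : V →+ M) (v : V),
      ∑ γ : Γ, (g γ : A') • k (if γ = 1 then v else 0) = k v := by
    intro M _ _ k v
    rw [Finset.sum_eq_single_of_mem 1 (Finset.mem_univ 1)]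
    · rw [if_pos rfl, hg1, one_smul]
    · intro b _ hb; rw [if_neg hb, map_zero, smul_zero]
  have hφemb : ∀ v : V, φf (emb v) = j v := by
    intro v
    rw [← hdelta emb v, hφE, hdelta j v]
  -- emb is injective
  have hembinj : ∀ v : V, emb v = 0 → v = 0 := by
    intro v hv
    have h1 := hcuniq (emb v) (fun γ => if γ = 1 then v else 0) (hdelta emb v).symm
    have h2 := hcuniq (emb v) (fun _ => 0)
      (by rw [hv]; simp only [map_zero, smul_zero, Finset.sum_const_zero])
    have h3 := h1.trans h2.symm
    simpa using congrFun h3 1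
  -- φ is surjective
  have hφsurj : Function.Surjective φ := by
    have hne : LinearMap.range φ ≠ ⊥ := by
      intro h
      have hm : φ (emb v0) ∈ LinearMap.range φ := LinearMap.mem_range_self φ (emb v0)
      rw [h, Submodule.mem_bot, hφapp, hφemb] at hm
      exact hv0 (hjinj (by simpa using hm))
    haveI := hN
    rcases eq_bot_or_eq_top (LinearMap.range φ) with h | h
    · exact absurd h hne
    · exact LinearMap.range_eq_top.mp h
  -- the simple A-submodules S γ of IV
  set S : Γ → Submodule A IV := fun γ =>
    { carrier := Set.range fun v : V => (g γ : A') • emb v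
      add_mem' := by
        rintro x y ⟨v, rfl⟩ ⟨w, rfl⟩
        refine ⟨v + w, ?_⟩
        show (g γ : A') • emb (v + w) = (g γ : A') • emb v + (g γ : A') • emb w
        rw [map_add, smul_add]
      zero_mem' := ⟨0, by show (g γ : A') • emb 0 = 0; rw [map_zero, smul_zero]⟩
      smul_mem' := by
        rintro a x ⟨v, rfl⟩
        refine ⟨ψ γ⁻¹ a • v, ?_⟩
        show (g γ : A') • emb (ψ γ⁻¹ a • v) = a • ((g γ : A') • emb v)
        rw [hembA, smul_smul, ← hrel' γ a, hAsmul, mul_smul] } with hS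
  have hSmem : ∀ (γ : Γ) (v : V), (g γ : A') • emb v ∈ S γ := fun γ v => ⟨v, rfl⟩
  have hSsimple : ∀ γ : Γ, IsSimpleModule A ↥(S γ) := by
    intro γ
    rw [isSimpleModule_iff_isAtom]
    constructor
    · intro h
      have hvmem := hSmem γ v0
      rw [h, Submodule.mem_bot] at hvmem
      have h2 : (g γ) • emb v0 = 0 := by rw [Units.smul_def]; exact hvmem
      have h3 : emb v0 = 0 := by
        have := congrArg (fun y => (g γ)⁻¹ • y) h2
        simpa [smul_smul] using this
      exact hv0 (hembinj v0 h3)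
    · intro b hb
      by_contra hbne
      obtain ⟨x, hxb, hx0⟩ := (Submodule.ne_bot_iff b).mp hbne
      obtain ⟨w, rfl⟩ := hb.le hxb
      have hw0 : w ≠ 0 := fun h => hx0 (by
        rw [h]; show (g γ : A') • emb 0 = 0; rw [map_zero, smul_zero])
      have hspan : Submodule.span A {w} = ⊤ := by
        haveI := hV
        rcases eq_bot_or_eq_top (Submodule.span A {w}) with h | h
        · exact absurd (h ▸ Submodule.mem_span_singleton_self w)
            (by rw [Submodule.mem_bot]; exact hw0)
        · exact h
      have hle : S γ ≤ b := by
        rintro _ ⟨u, rfl⟩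
        have hu : u ∈ Submodule.span A ({w} : Set V) := by rw [hspan]; trivial
        obtain ⟨a, rfl⟩ := Submodule.mem_span_singleton.mp hu
        show (g γ : A') • emb (a • w) ∈ b
        have heq : (g γ : A') • emb (a • w) = (ψ γ a) • ((g γ : A') • emb w) := by
          rw [hembA, smul_smul, hAsmul, smul_smul, hrel]
        rw [heq]
        exact b.smul_mem (ψ γ a) hxb
      exact hb.2 hle
  -- IV is a semisimple A-module
  haveI hssA : IsSemisimpleModule A IV := by
    apply IsSemisimpleModule.of_sSup_simples_eq_top
    rw [eq_top_iff]
    intro x _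
    have hx := hcspec x
    rw [hx]
    refine Submodule.sum_mem _ fun γ _ => ?_
    have hmem : S γ ∈ {m : Submodule A IV | IsSimpleModule A ↥m} := hSsimple γ
    exact le_sSup hmem (hSmem γ (cf x γ))
  -- the kernel of φ, as A'- and A-submodule
  set K : Submodule A' IV := LinearMap.ker φ with hK
  set KA : Submodule A IV :=
    { carrier := (K : Set IV)
      add_mem' := fun hx hy => K.add_mem hx hy
      zero_mem' := K.zero_mem
      smul_mem' := fun a x hx => by
        show ι a • x ∈ K
        exact K.smul_mem (ι a) hx } with hKA
  obtain ⟨WA, hWA⟩ := exists_isCompl KA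
  set π := KA.projectionOnto WA hWA with hπ
  have hπmem : ∀ x : IV, ((π x : KA) : IV) ∈ K := fun x => (π x).2
  have hπid : ∀ x, ∀ hx : x ∈ K, ((π x : KA) : IV) = x := by
    intro x hx
    have h := Submodule.linearProjOfIsCompl_apply_left hWA (⟨x, hx⟩ : KA)
    rw [show π x = π ((⟨x, hx⟩ : KA) : IV) from rfl, h]
  have hπadd : ∀ x y : IV, ((π (x + y) : KA) : IV) = ((π x : KA) : IV) + ((π y : KA) : IV) := by
    intro x y
    rw [map_add]
    rfl
  have hπι : ∀ (a : A) (x : IV), ((π (ι a • x) : KA) : IV) = ι a • ((π x : KA) : IV) := by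
    intro a x
    rw [← hAsmul, map_smul]
    rfl
  -- the averaged projection T
  have hcard : (Fintype.card Γ : ℂ) ≠ 0 := Nat.cast_ne_zero.mpr Fintype.card_ne_zero
  set T : IV → IV := fun x =>
    algebraMap ℂ A' (Fintype.card Γ : ℂ)⁻¹ •
      ∑ γ : Γ, (g γ⁻¹ : A') • ((π ((g γ : A') • x) : KA) : IV) with hT
  have hTadd : ∀ x y : IV, T (x + y) = T x + T y := by
    intro x y
    simp only [hT, smul_add, hπadd, Finset.sum_add_distrib]
  have hTmem : ∀ x : IV, T x ∈ K := by
    intro x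
    exact K.smul_mem _ (Submodule.sum_mem _ fun γ _ => K.smul_mem _ (hπmem _))
  have hTfix : ∀ x, x ∈ K → T x = x := by
    intro x hx
    have h1 : ∀ γ : Γ, (g γ⁻¹ : A') • ((π ((g γ : A') • x) : KA) : IV) = x := by
      intro γ
      rw [hπid _ (K.smul_mem _ hx), smul_smul, hgmul, inv_mul_cancel, hg1, one_smul]
    simp only [hT]
    rw [Finset.sum_congr rfl fun γ _ => h1 γ, Finset.sum_const, Finset.card_univ,
      ← Nat.cast_smul_eq_nsmul A' (Fintype.card Γ) x, ← map_natCast (algebraMap ℂ A'),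
      smul_smul, ← map_mul, inv_mul_cancel₀ hcard, map_one, one_smul]
  have hTι : ∀ (a : A) (x : IV), T (ι a • x) = ι a • T x := by
    intro a x
    simp only [hT]
    have hterm : ∀ γ : Γ, (g γ⁻¹ : A') • ((π ((g γ : A') • (ι a • x)) : KA) : IV)
        = ι a • ((g γ⁻¹ : A') • ((π ((g γ : A') • x) : KA) : IV)) := by
      intro γ
      rw [smul_smul (g γ : A') (ι a) x, hrel γ a, mul_smul, hπι, smul_smul, hrel'' γ a,
        mul_smul]
    rw [Finset.sum_congr rfl fun γ _ => hterm γ, ← Finset.smul_sum, smul_smul, smul_smul,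
      Algebra.commutes]
  have hTg : ∀ (δ : Γ) (x : IV), T ((g δ : A') • x) = (g δ : A') • T x := by
    intro δ x
    simp only [hT]
    have hsum : ∑ γ : Γ, (g γ⁻¹ : A') • ((π ((g γ : A') • ((g δ : A') • x)) : KA) : IV)
        = (g δ : A') • ∑ γ : Γ, (g γ⁻¹ : A') • ((π ((g γ : A') • x) : KA) : IV) := by
      rw [Finset.smul_sum]
      refine Fintype.sum_equiv (Equiv.mulRight δ) _ _ fun γ => ?_
      simp only [Equiv.coe_mulRight]
      rw [smul_smul (g γ : A') (g δ : A') x, hgmul, smul_smul (g δ : A'), hgmul,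
        mul_inv_rev, mul_inv_cancel_left]
    rw [hsum, smul_smul, smul_smul, Algebra.commutes]
  set Th : IV →+ IV := AddMonoidHom.mk' T hTadd with hTh
  set Tl : IV →ₗ[A'] IV :=
    { toFun := T, map_add' := hTadd,
      map_smul' := fun r x => hgen Th hTι hTg r x } with hTl
  set f2 : IV →ₗ[A'] K := LinearMap.codRestrict K Tl hTmem with hf2
  have hproj : ∀ x : K, f2 (x : IV) = x := by
    intro x
    exact Subtype.ext (hTfix x.1 x.2)
  have hcompl : IsCompl K (LinearMap.ker f2) := LinearMap.isCompl_of_proj hproj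
  set P : Submodule A' IV := LinearMap.ker f2 with hP
  -- φ restricted to P is bijective onto N
  have hinj : ∀ z : P, φ (z : IV) = 0 → (z : IV) = 0 := by
    intro z hz
    have h1 : (z : IV) ∈ K ⊓ P := ⟨LinearMap.mem_ker.mpr hz, z.2⟩
    rw [hcompl.inf_eq_bot] at h1
    exact h1
  refine ⟨P, K, hcompl.symm, ⟨LinearEquiv.ofBijective (φ.comp P.subtype) ⟨?_, ?_⟩⟩⟩
  · intro a b hab
    have h1 : φ ((a - b : P) : IV) = 0 := by
      have : φ (a : IV) = φ (b : IV) := hab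
      rw [Submodule.coe_sub, map_sub, this, sub_self]
    have h2 := hinj (a - b) h1
    rw [Submodule.coe_sub, sub_eq_zero] at h2
    exact Subtype.ext h2
  · intro n
    obtain ⟨x, hx⟩ := hφsurj n
    obtain ⟨k, p, hk, hp, hkp⟩ := Submodule.codisjoint_iff_exists_add_eq.mp hcompl.codisjoint x
    refine ⟨⟨p, hp⟩, ?_⟩
    have h1 : φ x = φ k + φ p := by rw [← hkp, map_add]
    have h2 : φ k = 0 := LinearMap.mem_ker.mp hk
    show φ p = n
    rw [← hx, h1, h2, zero_add]
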